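/- Let G be a graph on 2n vertices with no K_{2,n} subgraph whose complement Ḡ is bipartite, 2-connected, has minimum degree at least ⌈n/2⌉ + 250 and circumference at least 2n−4. Then Ḡ contains a cycle of every even length m with n+1 ≤ m ≤ 2n−4 (in particular, Ḡ cannot avoid C_m for even m in this range). -/

import Mathlib

open SimpleGraph

/-- `G` contains `H` as a (not necessarily induced) subgraph. -/
def Contains {V W : Type*} (G : SimpleGraph V) (H : SimpleGraph W) : Prop :=
  ∃ f : H →g G, Function.Injective f

/-- `G` has a cycle with `m` vertices (equivalently, of length `m`). -/
def HasCycleLength {V : Type*} (G : SimpleGraph V) (m : ℕ) : Prop :=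
  ∃ (v : V) (c : G.Walk v v), c.IsCycle ∧ c.length = m

/-- The Ramsey property for `K_{a,b}` versus the cycle `C_m`: every graph `Γ` on `N` vertices
contains `K_{a,b}`, or its complement contains a cycle of length `m`. -/
def RamseyProp (a b m N : ℕ) : Prop :=
  ∀ Γ : SimpleGraph (Fin N),
    Contains Γ (completeBipartiteGraph (Fin a) (Fin b)) ∨ HasCycleLength Γᶜ m

/-- `G` is `k`-connected. -/
def IsKConnected {V : Type*} [Fintype V] (k : ℕ) (G : SimpleGraph V) : Prop :=
  k < Fintype.card V ∧
    ∀ S : Finset V, S.card < k → (G.induce ((↑S : Set V)ᶜ)).Connected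

/-- The circumference of `G`: the length of a longest cycle. -/
noncomputable def circumference {V : Type*} (G : SimpleGraph V) : ℕ :=
  sSup {m | HasCycleLength G m}

section Aux

open Finset

/-- Build a cycle from a cyclically-adjacent injective vertex sequence. -/
lemma hasCycle_of_fun {V : Type*} (Gc : SimpleGraph V) (N : ℕ) (hN : 3 ≤ N) (f : ℕ → V)
    (hinj : ∀ i < N, ∀ j < N, f i = f j → i = j)
    (hadj : ∀ i, i + 1 < N → Gc.Adj (f i) (f (i + 1)))
    (hclose : Gc.Adj (f (N - 1)) (f 0)) :
    ∃ (v : V) (c : Gc.Walk v v), c.IsCycle ∧ c.length = N := by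
  have key : ∀ t, t < N → ∃ p : Gc.Walk (f 0) (f t),
      p.support = (List.range (t + 1)).map f ∧ p.length = t ∧
      p.edges = (List.range t).map (fun i => s(f i, f (i + 1))) := by
    intro t
    induction t with
    | zero => intro _; exact ⟨Walk.nil, by simp [List.range_succ], by simp, by simp⟩
    | succ t ih =>
      intro ht
      obtain ⟨p, hs, hl, he⟩ := ih (by omega)
      refine ⟨p.concat (hadj t ht), ?_, ?_, ?_⟩
      · rw [Walk.support_concat, hs]
        rw [List.range_succ (n := t + 1)]
        simp [List.concat_eq_append]
      · rw [Walk.length_concat, hl]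
      · rw [Walk.edges_concat, he, List.range_succ]
        simp [List.concat_eq_append]
  obtain ⟨p, hs, hl, he⟩ := key (N - 1) (by omega)
  refine ⟨f (N - 1), Walk.cons hclose p, ?_, ?_⟩
  · rw [Walk.cons_isCycle_iff]
    constructor
    · rw [Walk.isPath_def, hs]
      refine List.Nodup.map_on ?_ List.nodup_range
      intro x hx y hy hxy
      exact hinj x (by simp at hx; omega) y (by simp at hy; omega) hxy
    · intro hmem
      rw [he] at hmem
      simp only [List.mem_map, List.mem_range] at hmem
      obtain ⟨i, hi, hee⟩ := hmem
      rw [Sym2.eq_iff] at hee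
      rcases hee with ⟨h1, h2⟩ | ⟨h1, h2⟩
      · have : N - 1 = i := hinj _ (by omega) _ (by omega) h1.symm
        omega
      · have h0 : (0:ℕ) = i := hinj _ (by omega) _ (by omega) h1.symm
        have : N - 1 = i + 1 := hinj _ (by omega) _ (by omega) h2.symm
        omega
  · simp [hl]; omega

lemma contains_of_common {V : Type*} [DecidableEq V] (G : SimpleGraph V) (n : ℕ)
    (x y : V) (hxy : x ≠ y) (T : Finset V) (hT : T.card = n)
    (hadj : ∀ z ∈ T, G.Adj x z ∧ G.Adj y z) :
    Contains G (completeBipartiteGraph (Fin 2) (Fin n)) := by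
  have hxT : x ∉ T := fun h => G.loopless.irrefl x (hadj x h).1
  have hyT : y ∉ T := fun h => G.loopless.irrefl y (hadj y h).2
  set g : Fin n → V := fun j => (T.equivFin.symm (Fin.cast hT.symm j) : V) with hg
  have hgT : ∀ j, g j ∈ T := fun j => (T.equivFin.symm (Fin.cast hT.symm j)).2
  have hginj : Function.Injective g := by
    intro a b hab
    have := Subtype.ext (p := (· ∈ T)) hab
    have := T.equivFin.symm.injective this
    simpa [Fin.ext_iff] using this
  set F : Fin 2 ⊕ Fin n → V := Sum.elim (fun i => if i = 0 then x else y) g with hF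
  have hFinj : Function.Injective F := by
    rintro (i | j) (i' | j') h <;> simp only [hF, Sum.elim_inl, Sum.elim_inr] at h
    · congr 1
      fin_cases i <;> fin_cases i' <;> simp_all
    · exfalso
      by_cases hi : i = 0
      · simp [hi] at h; exact hxT (h ▸ hgT j')
      · rw [if_neg hi] at h; exact hyT (h ▸ hgT j')
    · exfalso
      by_cases hi : i' = 0
      · simp [hi] at h; exact hxT (h.symm ▸ hgT j)
      · rw [if_neg hi] at h; exact hyT (h.symm ▸ hgT j)
    · exact congrArg Sum.inr (hginj h)
  refine ⟨⟨F, ?_⟩, hFinj⟩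
  · rintro (i | j) (i' | j') h
    · simp [completeBipartiteGraph] at h
    · by_cases hi : i = 0
      · simpa [F, hi] using (hadj _ (hgT j')).1
      · simpa [F, hi] using (hadj _ (hgT j')).2
    · by_cases hi : i' = 0
      · simpa [F, hi] using ((hadj _ (hgT j)).1).symm
      · simpa [F, hi] using ((hadj _ (hgT j)).2).symm
    · simp [completeBipartiteGraph] at h

/-- Fisher-type double counting. -/
lemma fisher_count {V : Type*} [DecidableEq V] (U W' : Finset V) (M : V → Finset V)
    (hMU : ∀ w ∈ W', M w ⊆ U)
    (hpair : ∀ x ∈ U, ∀ y ∈ U, x ≠ y →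
      (W'.filter (fun w => x ∈ M w ∧ y ∈ M w)).card ≤ 2)
    (h : ℕ) (hh : ∀ w ∈ W', h ≤ (M w).card) :
    W'.card * h.choose 2 ≤ 2 * (U.card.choose 2) := by
  classical
  set PP := U.powersetCard 2 with hPP
  have step1 : W'.card * h.choose 2 ≤ ∑ w ∈ W', ((M w).powersetCard 2).card := by
    rw [← Finset.sum_const_nat (m := h.choose 2) (fun x hx => rfl)]
    apply Finset.sum_le_sum
    intro w hw
    rw [Finset.card_powersetCard]
    exact Nat.choose_le_choose 2 (hh w hw)
  have step2 : ∀ w ∈ W', (M w).powersetCard 2 = PP.filter (fun p => p ⊆ M w) := by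
    intro w hw
    ext p
    simp only [Finset.mem_powersetCard, hPP, Finset.mem_filter]
    constructor
    · rintro ⟨h1, h2⟩; exact ⟨⟨h1.trans (hMU w hw), h2⟩, h1⟩
    · rintro ⟨⟨_, h2⟩, h3⟩; exact ⟨h3, h2⟩
  have step3 : ∑ w ∈ W', ((M w).powersetCard 2).card
      = ∑ p ∈ PP, (W'.filter (fun w => p ⊆ M w)).card := by
    calc ∑ w ∈ W', ((M w).powersetCard 2).card
        = ∑ w ∈ W', ∑ p ∈ PP, (if p ⊆ M w then 1 else 0) := by
          apply Finset.sum_congr rfl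
          intro w hw
          rw [step2 w hw, Finset.card_filter]
      _ = ∑ p ∈ PP, ∑ w ∈ W', (if p ⊆ M w then 1 else 0) := Finset.sum_comm
      _ = ∑ p ∈ PP, (W'.filter (fun w => p ⊆ M w)).card := by
          apply Finset.sum_congr rfl
          intro p _
          rw [Finset.card_filter]
  have step4 : ∀ p ∈ PP, (W'.filter (fun w => p ⊆ M w)).card ≤ 2 := by
    intro p hp
    rw [hPP, Finset.mem_powersetCard] at hp
    obtain ⟨hpU, hp2⟩ := hp
    obtain ⟨x, y, hxy, rfl⟩ := Finset.card_eq_two.mp hp2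
    have hx : x ∈ U := hpU (by simp)
    have hy : y ∈ U := hpU (by simp)
    refine le_trans (Finset.card_le_card ?_) (hpair x hx y hy hxy)
    intro w hw
    rw [Finset.mem_filter] at hw ⊢
    refine ⟨hw.1, ?_, ?_⟩
    · exact hw.2 (by simp)
    · exact hw.2 (by simp)
  calc W'.card * h.choose 2 ≤ ∑ w ∈ W', ((M w).powersetCard 2).card := step1
    _ = ∑ p ∈ PP, (W'.filter (fun w => p ⊆ M w)).card := step3
    _ ≤ ∑ _p ∈ PP, 2 := Finset.sum_le_sum step4
    _ = 2 * U.card.choose 2 := by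
        rw [Finset.sum_const, smul_eq_mul, hPP, Finset.card_powersetCard, mul_comm]

end Aux

set_option maxHeartbeats 1600000 in
theorem stmt_14 {V : Type*} [Fintype V] [DecidableEq V] (G : SimpleGraph V) [DecidableRel G.Adj]
    (n : ℕ) (hcard : Fintype.card V = 2 * n)
    (hG : ¬ Contains G (completeBipartiteGraph (Fin 2) (Fin n)))
    (hbip : Gᶜ.Colorable 2) (h2 : IsKConnected 2 Gᶜ)
    (hδ : ∀ v, (n + 1) / 2 + 250 ≤ Gᶜ.degree v)
    (hcirc : 2 * n - 4 ≤ circumference Gᶜ) :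
    ∀ m, Even m → n + 1 ≤ m → m ≤ 2 * n - 4 → HasCycleLength Gᶜ m := by
  classical
  intro m hmE hm1 hm2
  obtain ⟨k, hmk⟩ := hmE
  have hmk2 : m = 2 * k := by omega
  have hn5 : 5  ≤ n := by omega
  obtain ⟨C⟩ := hbip
  set Gc := Gᶜ with hGcdef
  have hδ' : ∀ v, (n + 1) / 2 + 250 ≤ Gc.degree v := hδ
  set A : Finset V := Finset.univ.filter (fun v => C v = 0) with hA
  set B : Finset V := Finset.univ.filter (fun v => ¬ (C v = 0)) with hB
  have hAmem : ∀ v, v ∈ A ↔ C v = 0 := by intro v; simp [hA]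
  have hBmem : ∀ v, v ∈ B ↔ ¬ (C v = 0) := by intro v; simp [hB]
  have hABdisj : ∀ v, v ∈ A → v ∈ B → False := by
    intro v h1 h2; rw [hAmem] at h1; rw [hBmem] at h2; exact h2 h1
  have hABall : ∀ v : V, v ∈ A ∨ v ∈ B := by
    intro v
    by_cases h : C v = 0
    · exact Or.inl ((hAmem v).mpr h)
    · exact Or.inr ((hBmem v).mpr h)
  have hcardAB : A.card + B.card = 2 * n := by
    rw [hA, hB, Finset.card_filter_add_card_filter_not, Finset.card_univ, hcard]
  -- adjacency facts
  have hvalid : ∀ {x y : V}, Gc.Adj x y → C x ≠ C y := fun h => C.valid h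
  have hsame : ∀ {x y : V}, C x = C y → ¬ Gc.Adj x y := by
    intro x y h hadj; exact hvalid hadj h
  have hsameB : ∀ {x y : V}, x ∈ B → y ∈ B → ¬ Gc.Adj x y := by
    intro x y hx hy
    rw [hBmem] at hx hy
    have hone : ∀ z : Fin 2, z ≠ 0 → z = 1 := by decide
    have : C x = C y := by
      rw [hone _ hx, hone _ hy]
    exact hsame this
  have hsameA : ∀ {x y : V}, x ∈ A → y ∈ A → ¬ Gc.Adj x y := by
    intro x y hx hy
    rw [hAmem] at hx hy
    exact hsame (hx.trans hy.symm)
  have hGadj : ∀ {x y : V}, x ≠ y → ¬ Gc.Adj x y → G.Adj x y := by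
    intro x y hne hnadj
    by_contra hg
    exact hnadj ((G.compl_adj x y).mpr ⟨hne, hg⟩)
  have hGadjA : ∀ {x y : V}, x ∈ A → y ∈ A → x ≠ y → G.Adj x y := by
    intro x y hx hy hne; exact hGadj hne (hsameA hx hy)
  have hGadjB : ∀ {x y : V}, x ∈ B → y ∈ B → x ≠ y → G.Adj x y := by
    intro x y hx hy hne; exact hGadj hne (hsameB hx hy)
  have hGadjAB : ∀ {x y : V}, x ∈ A → y ∈ B → ¬ Gc.Adj x y → G.Adj x y := by
    intro x y hx hy hnadj
    refine hGadj ?_ hnadj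
    intro h; exact hABdisj x hx (h ▸ hy)
  -- neighborhoods
  have hNbB : ∀ {x : V}, x ∈ A → Gc.neighborFinset x ⊆ B := by
    intro x hx w hw
    rw [SimpleGraph.mem_neighborFinset] at hw
    rcases hABall w with h | h
    · exact absurd hw (hsameA hx h)
    · exact h
  have hNbA : ∀ {x : V}, x ∈ B → Gc.neighborFinset x ⊆ A := by
    intro x hx w hw
    rw [SimpleGraph.mem_neighborFinset] at hw
    rcases hABall w with h | h
    · exact h
    · exact absurd hw (hsameB hx h)
  have hdeg : ∀ v : V, Gc.degree v = (Gc.neighborFinset v).card := fun v => rfl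
  -- nonemptiness of both classes
  have hVcard : 0 < Fintype.card V := by omega
  have hABne : A.Nonempty ∧ B.Nonempty := by
    obtain ⟨v0⟩ := Fintype.card_pos_iff.mp hVcard
    have hd := hδ' v0
    have : 0 < (Gc.neighborFinset v0).card := by rw [← hdeg]; omega
    obtain ⟨v1, hv1⟩ := Finset.card_pos.mp this
    rw [SimpleGraph.mem_neighborFinset] at hv1
    have hne := hvalid hv1
    rcases hABall v0 with h0 | h0 <;> rcases hABall v1 with h1 | h1
    · exact absurd hv1 (hsameA h0 h1)
    · exact ⟨⟨v0, h0⟩, ⟨v1, h1⟩⟩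
    · exact ⟨⟨v1, h1⟩, ⟨v0, h0⟩⟩
    · exact absurd hv1 (hsameB h0 h1)
  have hδA : (n + 1) / 2 + 250 ≤ A.card := by
    obtain ⟨w, hw⟩ := hABne.2
    calc (n+1)/2 + 250 ≤ Gc.degree w := hδ' w
      _ = (Gc.neighborFinset w).card := hdeg w
      _ ≤ A.card := Finset.card_le_card (hNbA hw)
  have hδB : (n + 1) / 2 + 250 ≤ B.card := by
    obtain ⟨x, hx⟩ := hABne.1
    calc (n+1)/2 + 250 ≤ Gc.degree x := hδ' x
      _ = (Gc.neighborFinset x).card := hdeg x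
      _ ≤ B.card := Finset.card_le_card (hNbB hx)
  -- no K_{2,n}: common neighborhood cap
  have hcap : ∀ x y : V, x ≠ y →
      (Finset.univ.filter (fun z => G.Adj x z ∧ G.Adj y z)).card ≤ n - 1 := by
    intro x y hxy
    by_contra hc
    push_neg at hc
    obtain ⟨T, hTsub, hTcard⟩ := Finset.exists_subset_card_eq
      (show n ≤ (Finset.univ.filter (fun z => G.Adj x z ∧ G.Adj y z)).card by omega)
    refine hG (contains_of_common G n x y hxy T hTcard ?_)
    intro z hz
    have := hTsub hz
    rw [Finset.mem_filter] at this
    exact this.2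
  -- class size upper bounds
  have hAub : A.card ≤ n + 1 := by
    have h2A : 1 < A.card := by omega
    obtain ⟨x, hx, y, hy, hxy⟩ := Finset.one_lt_card.mp h2A
    have hsub : A \ {x, y} ⊆ Finset.univ.filter (fun z => G.Adj x z ∧ G.Adj y z) := by
      intro z hz
      rw [Finset.mem_sdiff, Finset.mem_insert, Finset.mem_singleton] at hz
      push_neg at hz
      rw [Finset.mem_filter]
      exact ⟨Finset.mem_univ z,
        hGadjA hx hz.1 (Ne.symm hz.2.1), hGadjA hy hz.1 (Ne.symm hz.2.2)⟩
    have h1 := Finset.card_le_card hsub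
    have h2 := hcap x y hxy
    have h3 : A.card ≤ (A \ {x, y}).card + ({x, y} : Finset V).card :=
      Finset.card_le_card_sdiff_add_card
    have h4 : ({x, y} : Finset V).card ≤ 2 := Finset.card_insert_le _ _ |>.trans (by simp)
    omega
  have hBub : B.card ≤ n + 1 := by
    have h2B : 1 < B.card := by omega
    obtain ⟨x, hx, y, hy, hxy⟩ := Finset.one_lt_card.mp h2B
    have hsub : B \ {x, y} ⊆ Finset.univ.filter (fun z => G.Adj x z ∧ G.Adj y z) := by
      intro z hz
      rw [Finset.mem_sdiff, Finset.mem_insert, Finset.mem_singleton] at hz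
      push_neg at hz
      rw [Finset.mem_filter]
      exact ⟨Finset.mem_univ z,
        hGadjB hx hz.1 (Ne.symm hz.2.1), hGadjB hy hz.1 (Ne.symm hz.2.2)⟩
    have h1 := Finset.card_le_card hsub
    have h2 := hcap x y hxy
    have h3 : B.card ≤ (B \ {x, y}).card + ({x, y} : Finset V).card :=
      Finset.card_le_card_sdiff_add_card
    have h4 : ({x, y} : Finset V).card ≤ 2 := Finset.card_insert_le _ _ |>.trans (by simp)
    omega
  have hn498 : 498 ≤ n := by omega
  -- codegree condition: two vertices of A have at most 2 common non-neighbors in B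
  have hco : ∀ x y : V, x ∈ A → y ∈ A → x ≠ y →
      (B.filter (fun z => ¬ Gc.Adj x z ∧ ¬ Gc.Adj y z)).card ≤ 2 := by
    intro x y hx hy hxy
    set D := B.filter (fun z => ¬ Gc.Adj x z ∧ ¬ Gc.Adj y z) with hD
    have hsub : D ∪ (A \ {x, y}) ⊆ Finset.univ.filter (fun z => G.Adj x z ∧ G.Adj y z) := by
      intro z hz
      rw [Finset.mem_union] at hz
      rw [Finset.mem_filter]
      rcases hz with hz | hz
      · rw [hD, Finset.mem_filter] at hz
        exact ⟨Finset.mem_univ z, hGadjAB hx hz.1 hz.2.1, hGadjAB hy hz.1 hz.2.2⟩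
      · rw [Finset.mem_sdiff, Finset.mem_insert, Finset.mem_singleton] at hz
        push_neg at hz
        exact ⟨Finset.mem_univ z,
          hGadjA hx hz.1 (Ne.symm hz.2.1), hGadjA hy hz.1 (Ne.symm hz.2.2)⟩
    have hdisj : Disjoint D (A \ {x, y}) := by
      rw [Finset.disjoint_left]
      intro z hz hz'
      rw [hD, Finset.mem_filter] at hz
      rw [Finset.mem_sdiff] at hz'
      exact hABdisj z hz'.1 hz.1
    have h1 : D.card + (A \ {x, y}).card = (D ∪ (A \ {x, y})).card :=
      (Finset.card_union_of_disjoint hdisj).symm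
    have h2 := Finset.card_le_card hsub
    have h3 := hcap x y hxy
    have h4 : A.card ≤ (A \ {x, y}).card + ({x, y} : Finset V).card :=
      Finset.card_le_card_sdiff_add_card
    have h5 : ({x, y} : Finset V).card ≤ 2 := Finset.card_insert_le _ _ |>.trans (by simp)
    omega
  -- degree complement: a vertex of B misses few vertices of A
  have hmiss : ∀ w : V, w ∈ B → (A.filter (fun x => ¬ Gc.Adj x w)).card + Gc.degree w = A.card := by
    intro w hw
    have heq : A.filter (fun x => Gc.Adj x w) = Gc.neighborFinset w := by
      ext x
      rw [Finset.mem_filter, SimpleGraph.mem_neighborFinset]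
      constructor
      · rintro ⟨_, h⟩; exact h.symm
      · intro h; exact ⟨hNbA hw (by rw [SimpleGraph.mem_neighborFinset]; exact h), h.symm⟩
    have := Finset.card_filter_add_card_filter_not (s := A) (fun x => Gc.Adj x w)
    rw [heq] at this
    rw [hdeg]
    omega
  -- now build the cycle
  have hk0 : 0 < k := by omega
  have hkA : k ≤ A.card := by omega
  set u : Fin k → V := fun i => (A.equivFin.symm ⟨i.val, lt_of_lt_of_le i.isLt hkA⟩ : V) with hu
  have huA : ∀ i, u i ∈ A := fun i => (A.equivFin.symm ⟨i.val, lt_of_lt_of_le i.isLt hkA⟩).2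
  have huinj : ∀ i j : Fin k, u i = u j → i = j := by
    intro i j hij
    have h1 := A.equivFin.symm.injective (Subtype.ext (p := (· ∈ A)) hij)
    have h2 := congrArg Fin.val h1
    exact Fin.ext h2
  set u' : ℕ → V := fun t => u ⟨t % k, Nat.mod_lt t hk0⟩ with hu'
  have hu'A : ∀ t, u' t ∈ A := fun t => huA _
  have hu'inj : ∀ s t : ℕ, u' s = u' t → s % k = t % k := by
    intro s t h
    have h3 := congrArg Fin.val (huinj _ _ h)
    exact h3
  have hu'mod : ∀ s t : ℕ, s % k = t % k → u' s = u' t := by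
    intro s t h
    show u ⟨s % k, Nat.mod_lt s hk0⟩ = u ⟨t % k, Nat.mod_lt t hk0⟩
    exact congrArg u (Fin.ext h)
  set S : Fin k → Finset V :=
    fun i => B.filter (fun z => Gc.Adj (u' i.val) z ∧ Gc.Adj (u' (i.val + 1)) z) with hS
  have hSB : ∀ i, S i ⊆ B := fun i => Finset.filter_subset _ _
  have hScard : ∀ i, 499 ≤ (S i).card := by
    intro i
    have heq : S i = Gc.neighborFinset (u' i.val) ∩ Gc.neighborFinset (u' (i.val + 1)) := by
      ext z
      rw [hS]
      simp only [Finset.mem_filter, Finset.mem_inter, SimpleGraph.mem_neighborFinset]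
      constructor
      · rintro ⟨_, h1, h2⟩; exact ⟨h1, h2⟩
      · rintro ⟨h1, h2⟩
        exact ⟨hNbB (hu'A i.val) (by rw [SimpleGraph.mem_neighborFinset]; exact h1), h1, h2⟩
    have hun : Gc.neighborFinset (u' i.val) ∪ Gc.neighborFinset (u' (i.val + 1)) ⊆ B :=
      Finset.union_subset (hNbB (hu'A _)) (hNbB (hu'A _))
    have h1 := Finset.card_inter_add_card_union
      (Gc.neighborFinset (u' i.val)) (Gc.neighborFinset (u' (i.val + 1)))
    have h2 := Finset.card_le_card hun
    have h3 := hδ' (u' i.val)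
    have h4 := hδ' (u' (i.val + 1))
    rw [hdeg] at h3 h4
    rw [heq]
    omega
  -- Hall's condition
  have hHall : ∀ I : Finset (Fin k), I.card ≤ (I.biUnion S).card := by
    intro I
    have hIk : I.card ≤ k := le_trans (Finset.card_le_univ I) (by simp)
    have hBiUB : I.biUnion S ⊆ B := by
      intro z hz
      rw [Finset.mem_biUnion] at hz
      obtain ⟨i, _, hi⟩ := hz
      exact hSB i hi
    rcases Nat.lt_or_ge I.card 500 with hI | hI
    · rcases I.eq_empty_or_nonempty with rfl | ⟨i, hi⟩
      · simp
      · have h1 : S i ⊆ I.biUnion S := Finset.subset_biUnion_of_mem S hi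
        have h2 := Finset.card_le_card h1
        have h3 := hScard i
        omega
    · -- the set of "missed" vertices
      set W := B \ I.biUnion S with hW
      set U : Finset V := I.biUnion (fun i => ({u' i.val, u' (i.val + 1)} : Finset V)) with hU
      have hUA : U ⊆ A := by
        intro x hx
        rw [hU, Finset.mem_biUnion] at hx
        obtain ⟨i, _, hi⟩ := hx
        rw [Finset.mem_insert, Finset.mem_singleton] at hi
        rcases hi with rfl | rfl <;> exact hu'A _
      have hUcard : U.card ≤ 2 * I.card := by
        refine le_trans Finset.card_biUnion_le ?_
        calc ∑ i ∈ I, ({u' i.val, u' (i.val + 1)} : Finset V).card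
            ≤ ∑ _i ∈ I, 2 := by
              refine Finset.sum_le_sum fun i _ => ?_
              exact le_trans (Finset.card_insert_le _ _) (by simp)
          _ = 2 * I.card := by rw [Finset.sum_const, smul_eq_mul, mul_comm]
      set M : V → Finset V := fun w => U.filter (fun x => ¬ Gc.Adj x w) with hM
      have hMcard : ∀ w ∈ W, I.card ≤ 2 * (M w).card := by
        intro w hw
        rw [hW, Finset.mem_sdiff] at hw
        obtain ⟨hwB, hwnot⟩ := hw
        have hmissI : ∀ i ∈ I, ¬ (Gc.Adj (u' i.val) w ∧ Gc.Adj (u' (i.val + 1)) w) := by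
          intro i hi hcontra
          refine hwnot (Finset.mem_biUnion.mpr ⟨i, hi, ?_⟩)
          rw [hS, Finset.mem_filter]
          exact ⟨hwB, hcontra⟩
        set φ : Fin k → V := fun i =>
          if Gc.Adj (u' i.val) w then u' (i.val + 1) else u' i.val with hφ
        have hφM : ∀ i ∈ I, φ i ∈ M w := by
          intro i hi
          rw [hM, Finset.mem_filter]
          by_cases hc : Gc.Adj (u' i.val) w
          · have : ¬ Gc.Adj (u' (i.val + 1)) w := fun hc2 => hmissI i hi ⟨hc, hc2⟩
            rw [hφ]
            simp only [if_pos hc]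
            refine ⟨?_, this⟩
            rw [hU]
            refine Finset.mem_biUnion.mpr ⟨i, hi, ?_⟩
            simp
          · rw [hφ]
            simp only [if_neg hc]
            refine ⟨?_, hc⟩
            rw [hU]
            refine Finset.mem_biUnion.mpr ⟨i, hi, ?_⟩
            simp
        have hsucc : ∀ i j : ℕ, i < k → j < k → (i + 1) % k = (j + 1) % k → i = j := by
          intro i j hik hjk hmod
          rcases Nat.lt_or_ge (i + 1) k with h1 | h1 <;> rcases Nat.lt_or_ge (j + 1) k with h2 | h2
          · rw [Nat.mod_eq_of_lt h1, Nat.mod_eq_of_lt h2] at hmod; omega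
          · have hjk1 : j + 1 = k := by omega
            rw [Nat.mod_eq_of_lt h1, hjk1, Nat.mod_self] at hmod; omega
          · have hik1 : i + 1 = k := by omega
            rw [Nat.mod_eq_of_lt h2, hik1, Nat.mod_self] at hmod; omega
          · omega
        have hfib : ∀ b ∈ M w, (I.filter (fun i => φ i = b)).card ≤ 2 := by
          intro b _
          have : (I.filter (fun i => φ i = b)).card ≤ (Finset.univ : Finset Bool).card := by
            refine Finset.card_le_card_of_injOn
              (fun i => decide (Gc.Adj (u' i.val) w)) (fun _ _ => Finset.mem_univ _) ?_
            intro i hi j hj hdec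
            rw [Finset.coe_filter] at hi hj
            obtain ⟨-, hib⟩ := hi
            obtain ⟨-, hjb⟩ := hj
            simp only [decide_eq_decide] at hdec
            by_cases hc : Gc.Adj (u' i.val) w
            · have hc' : Gc.Adj (u' j.val) w := hdec.mp hc
              rw [hφ] at hib hjb
              simp only [if_pos hc] at hib
              simp only [if_pos hc'] at hjb
              have := hu'inj _ _ (hib.trans hjb.symm)
              exact Fin.ext (hsucc i.val j.val i.isLt j.isLt this)
            · have hc' : ¬ Gc.Adj (u' j.val) w := fun h => hc (hdec.mpr h)
              rw [hφ] at hib hjb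
              simp only [if_neg hc] at hib
              simp only [if_neg hc'] at hjb
              have := hu'inj _ _ (hib.trans hjb.symm)
              rw [Nat.mod_eq_of_lt i.isLt, Nat.mod_eq_of_lt j.isLt] at this
              exact Fin.ext this
          simpa using this
        exact Finset.card_le_mul_card_image_of_maps_to hφM 2 hfib
      have hMub : ∀ w ∈ W, (M w).card ≤ (n + 1) - ((n + 1) / 2 + 250) := by
        intro w hw
        rw [hW, Finset.mem_sdiff] at hw
        have hsub : M w ⊆ A.filter (fun x => ¬ Gc.Adj x w) := by
          intro x hx
          rw [hM, Finset.mem_filter] at hx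
          rw [Finset.mem_filter]
          exact ⟨hUA hx.1, hx.2⟩
        have h1 := Finset.card_le_card hsub
        have h2 := hmiss w hw.1
        have h3 := hδ' w
        omega
      rcases Nat.lt_or_ge I.card (n - 40) with hreg | hreg
      · -- Fisher regime
        have hWc : W.card ≤ 40 := by
          by_contra hc
          push_neg at hc
          obtain ⟨W', hW'sub, hW'card⟩ := Finset.exists_subset_card_eq
            (show 41 ≤ W.card by omega)
          have hpair : ∀ x ∈ U, ∀ y ∈ U, x ≠ y →
              (W'.filter (fun w => x ∈ M w ∧ y ∈ M w)).card ≤ 2 := by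
            intro x hx y hy hxy
            refine le_trans (Finset.card_le_card ?_) (hco x y (hUA hx) (hUA hy) hxy)
            intro w hw
            rw [Finset.mem_filter] at hw
            obtain ⟨hwW', hxM, hyM⟩ := hw
            have hwB : w ∈ B := by
              have := hW'sub hwW'
              rw [hW, Finset.mem_sdiff] at this
              exact this.1
            rw [hM, Finset.mem_filter] at hxM hyM
            rw [Finset.mem_filter]
            exact ⟨hwB, hxM.2, hyM.2⟩
          have hMU : ∀ w ∈ W', M w ⊆ U := fun w _ => Finset.filter_subset _ _
          set h0 := (I.card + 1) / 2 with hh0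
          have hh : ∀ w ∈ W', h0 ≤ (M w).card := by
            intro w hw
            have := hMcard w (hW'sub hw)
            omega
          have hfc := fisher_count U W' M hMU hpair h0 hh
          rw [hW'card] at hfc
          have hc2 : (U.card.choose 2) ≤ ((2 * I.card).choose 2) :=
            Nat.choose_le_choose 2 hUcard
          have hfc2 : 41 * h0.choose 2 ≤ 2 * ((2 * I.card).choose 2) := by omega
          have h2c : ∀ N : ℕ, 2 * N.choose 2 = N * (N - 1) := by
            intro N
            rcases N with _ | N
            · simp
            · rw [Nat.choose_two_right]
              have : (N + 1) * (N + 1 - 1) = 2 * (N * (N + 1) / 2) + N * (N + 1) % 2 := by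
                simp only [Nat.add_sub_cancel]
                rw [mul_comm (N + 1) N]
                omega
              have heven : N * (N + 1) % 2 = 0 := Nat.even_iff.mp (Nat.even_mul_succ_self N)
              omega
          have hfc3 : 41 * (h0 * (h0 - 1)) ≤ 2 * ((2 * I.card) * (2 * I.card - 1)) := by
            have e1 := h2c h0
            have e2 := h2c (2 * I.card)
            omega
          have hh250 : 250 ≤ h0 := by omega
          have hIh : I.card ≤ 2 * h0 := by omega
          obtain ⟨h1, hh1⟩ : ∃ h1, h0 = h1 + 1 := ⟨h0 - 1, by omega⟩
          obtain ⟨r, hr⟩ : ∃ r, 2 * I.card = r + 1 := ⟨2 * I.card - 1, by omega⟩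
          have hF : 41 * ((h1 + 1) * h1) ≤ 2 * ((r + 1) * r) := by
            rw [hh1] at hfc3
            rw [hr] at hfc3
            simpa using hfc3
          have hrb : r + 1 ≤ 4 * h1 + 4 := by omega
          have hr1 : r ≤ 4 * h1 + 4 := by omega
          have h1b : 249 ≤ h1 := by omega
          have hmul : (r + 1) * r ≤ (4 * h1 + 4) * (4 * h1 + 4) := Nat.mul_le_mul hrb hr1
          have hF2 : 41 * ((h1 + 1) * h1) ≤ 2 * ((4 * h1 + 4) * (4 * h1 + 4)) :=
            le_trans hF (Nat.mul_le_mul_left 2 hmul)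
          have e1 : 41 * ((h1 + 1) * h1) = (h1 + 1) * (41 * h1) := by ring
          have e2 : 2 * ((4 * h1 + 4) * (4 * h1 + 4)) = (h1 + 1) * (32 * (h1 + 1)) := by ring
          rw [e1, e2] at hF2
          have hfin := Nat.le_of_mul_le_mul_left hF2 (by omega)
          omega
        have hcover : B.card ≤ W.card + (I.biUnion S).card := by
          have : B ⊆ W ∪ I.biUnion S := by
            intro z hz
            rw [Finset.mem_union, hW, Finset.mem_sdiff]
            by_cases h : z ∈ I.biUnion S
            · exact Or.inr h
            · exact Or.inl ⟨hz, h⟩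
          calc B.card ≤ (W ∪ I.biUnion S).card := Finset.card_le_card this
            _ ≤ W.card + (I.biUnion S).card := Finset.card_union_le _ _
        omega
      · -- large regime: W is empty
        have hWemp : W = ∅ := by
          rcases W.eq_empty_or_nonempty with h | ⟨w, hw⟩
          · exact h
          · exfalso
            have h1 := hMcard w hw
            have h2 := hMub w hw
            omega
        have : B ⊆ I.biUnion S := by
          intro z hz
          by_contra h
          have : z ∈ W := by rw [hW, Finset.mem_sdiff]; exact ⟨hz, h⟩
          rw [hWemp] at this
          exact absurd this (Finset.notMem_empty z)
        have := Finset.card_le_card this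
        omega
  -- apply Hall
  obtain ⟨ww, hwinj, hwS⟩ :=
    (Finset.all_card_le_biUnion_card_iff_exists_injective S).mp hHall
  have hwB : ∀ i, ww i ∈ B := fun i => hSB i (hwS i)
  have hwadj1 : ∀ i : Fin k, Gc.Adj (u' i.val) (ww i) := by
    intro i
    have := hwS i
    rw [hS, Finset.mem_filter] at this
    exact this.2.1
  have hwadj2 : ∀ i : Fin k, Gc.Adj (u' (i.val + 1)) (ww i) := by
    intro i
    have := hwS i
    rw [hS, Finset.mem_filter] at this
    exact this.2.2
  set w' : ℕ → V := fun t => ww ⟨t % k, Nat.mod_lt t hk0⟩ with hw'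
  set f : ℕ → V := fun j => if j % 2 = 0 then u' (j / 2) else w' (j / 2) with hf
  have hfinj : ∀ i < m, ∀ j < m, f i = f j → i = j := by
    intro i hi j hj hij
    rw [hf] at hij
    by_cases h1 : i % 2 = 0 <;> by_cases h2 : j % 2 = 0
    · simp only [if_pos h1, if_pos h2] at hij
      have := hu'inj _ _ hij
      rw [Nat.mod_eq_of_lt (show i / 2 < k by omega),
        Nat.mod_eq_of_lt (show j / 2 < k by omega)] at this
      omega
    · simp only [if_pos h1, if_neg h2] at hij
      exact absurd (hij ▸ hu'A (i / 2)) (fun h => hABdisj _ h (hw' ▸ hwB _))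
    · simp only [if_neg h1, if_pos h2] at hij
      exact absurd (hij ▸ (hw' ▸ hwB _ : w' (i / 2) ∈ B))
        (fun h => hABdisj _ (hu'A (j / 2)) h)
    · simp only [if_neg h1, if_neg h2] at hij
      rw [hw'] at hij
      have := hwinj hij
      have hval : (i / 2) % k = (j / 2) % k := congrArg Fin.val this
      rw [Nat.mod_eq_of_lt (show i / 2 < k by omega),
        Nat.mod_eq_of_lt (show j / 2 < k by omega)] at hval
      omega
  have hfadj : ∀ i, i + 1 < m → Gc.Adj (f i) (f (i + 1)) := by
    intro i hi
    by_cases h1 : i % 2 = 0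
    · have e1 : f i = u' (i / 2) := by rw [hf]; simp only [if_pos h1]
      have e2 : f (i + 1) = w' ((i + 1) / 2) := by
        rw [hf]
        have h : ¬ ((i + 1) % 2 = 0) := by omega
        simp only [if_neg h]
      have e3 : (i + 1) / 2 = i / 2 := by omega
      have ht : i / 2 < k := by omega
      have e4 : w' (i / 2) = ww ⟨i / 2, ht⟩ := by
        show ww ⟨i / 2 % k, Nat.mod_lt _ hk0⟩ = ww ⟨i / 2, ht⟩
        exact congrArg ww (Fin.ext (Nat.mod_eq_of_lt ht))
      rw [e1, e2, e3, e4]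
      exact hwadj1 ⟨i / 2, ht⟩
    · have e1 : f i = w' (i / 2) := by rw [hf]; simp only [if_neg h1]
      have e2 : f (i + 1) = u' ((i + 1) / 2) := by
        rw [hf]
        have h : (i + 1) % 2 = 0 := by omega
        simp only [if_pos h]
      have e3 : (i + 1) / 2 = i / 2 + 1 := by omega
      have ht : i / 2 < k := by omega
      have e4 : w' (i / 2) = ww ⟨i / 2, ht⟩ := by
        show ww ⟨i / 2 % k, Nat.mod_lt _ hk0⟩ = ww ⟨i / 2, ht⟩
        exact congrArg ww (Fin.ext (Nat.mod_eq_of_lt ht))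
      rw [e1, e2, e3, e4]
      exact (hwadj2 ⟨i / 2, ht⟩).symm
  have hclose : Gc.Adj (f (m - 1)) (f 0) := by
    have hm3 : 3 ≤ m := by omega
    have e1 : f (m - 1) = w' ((m - 1) / 2) := by
      rw [hf]
      have h : ¬ ((m - 1) % 2 = 0) := by omega
      simp only [if_neg h]
    have e2 : (m - 1) / 2 = k - 1 := by omega
    have ht : k - 1 < k := by omega
    have e3 : w' (k - 1) = ww ⟨k - 1, ht⟩ := by
      show ww ⟨(k - 1) % k, Nat.mod_lt _ hk0⟩ = ww ⟨k - 1, ht⟩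
      exact congrArg ww (Fin.ext (Nat.mod_eq_of_lt ht))
    have e4 : f 0 = u' 0 := by rw [hf]; simp
    have e5 : u' ((⟨k - 1, ht⟩ : Fin k).val + 1) = u' 0 := by
      apply hu'mod
      have : (k - 1) + 1 = k := by omega
      simp only [this, Nat.mod_self, Nat.zero_mod]
    have h := (hwadj2 ⟨k - 1, ht⟩).symm
    rw [e5] at h
    rw [e1, e2, e3, e4]
    exact h
  exact hasCycle_of_fun Gc m (by omega) f hfinj hfadj hclose
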